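/- In a unital normed algebra, the set of real elements is closed in the norm topology: if (a_n) is a sequence of real elements converging in norm to a, then a is real. -/
import Mathlib


/-- An element `a` of a unital normed algebra is positive if `‖1 - ε a‖ ≤ 1 + o(ε)`
as `ε → 0⁺`. -/
def IsPositiveElem {A : Type*} [NormedRing A] [NormedAlgebra ℝ A] (a : A) : Prop :=
  ∀ C > (0 : ℝ), ∃ δ > (0 : ℝ), ∀ ε : ℝ, 0 < ε → ε < δ → ‖1 - ε • a‖ ≤ 1 + C * ε

/-- An element `a` is real if `a²` is positive. -/
def IsRealElem {A : Type*} [NormedRing A] [NormedAlgebra ℝ A] (a : A) : Prop :=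
  IsPositiveElem (a ^ 2)

/-- In a unital normed algebra the set of real elements is norm-closed: the limit of a
norm-convergent sequence of real elements is real. -/
theorem isRealElem_closed {A : Type*} [NormedRing A] [NormOneClass A] [NormedAlgebra ℝ A]
    (a : ℕ → A) (ha : ∀ n, IsRealElem (a n)) (l : A)
    (hlim : Filter.Tendsto a Filter.atTop (nhds l)) :
    IsRealElem l := by
  intro C hC
  have hsq : Filter.Tendsto (fun n => (a n) ^ 2) Filter.atTop (nhds (l ^ 2)) :=
    hlim.pow 2
  obtain ⟨N, hN⟩ := (Metric.tendsto_atTop.mp hsq) (C / 2) (by linarith)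
  have hdist : ‖(a N) ^ 2 - l ^ 2‖ < C / 2 := by
    have := hN N le_rfl
    rwa [dist_eq_norm] at this
  obtain ⟨δ, hδ, hb⟩ := ha N (C / 2) (by linarith)
  refine ⟨δ, hδ, fun ε hε hεδ => ?_⟩
  have key : (1 : A) - ε • l ^ 2 = (1 - ε • (a N) ^ 2) + ε • ((a N) ^ 2 - l ^ 2) := by
    rw [smul_sub]; abel
  calc ‖(1 : A) - ε • l ^ 2‖ ≤ ‖(1 : A) - ε • (a N) ^ 2‖ + ‖ε • ((a N) ^ 2 - l ^ 2)‖ := by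
        rw [key]; exact norm_add_le _ _
    _ ≤ (1 + C / 2 * ε) + ε * (C / 2) := by
        refine add_le_add (hb ε hε hεδ) ?_
        rw [norm_smul, Real.norm_of_nonneg hε.le]
        exact mul_le_mul_of_nonneg_left hdist.le hε.le
    _ = 1 + C * ε := by ring
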